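/- Under the same setup as the previous statement but with $\mathbb{E}[\Delta_i] = \mu \ge 0$, the minimum expected average generation satisfies $\lim_{n\to\infty}\mathbb{E}[\frac{1}{n}\sum_{i=1}^n G_i] = \big(\mathbb{E}[\Delta_1^- - \alpha\Delta_1^+]\big)^+$. -/

import Mathlib

open MeasureTheory ProbabilityTheory Filter Topology

private lemma tele_sum (f : ℕ → ℝ) (n : ℕ) :
    ∑ i ∈ Finset.Ioc 0 n, (f (i + 1) - f i) = f (n + 1) - f 1 := by
  induction n with
  | zero => simp
  | succ n ih => rw [Finset.sum_Ioc_succ_top (Nat.zero_le _), ih]; ring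

private lemma sqrt_div_tendsto (v : ℕ → ℝ) (hv : ∀ n, 0 ≤ v n)
    (h : Tendsto (fun n : ℕ => v n / (n : ℝ) ^ 2) atTop (𝓝 0)) :
    Tendsto (fun n : ℕ => Real.sqrt (v n) / (n : ℝ)) atTop (𝓝 0) := by
  have h2 : Tendsto (fun n : ℕ => Real.sqrt (v n / (n : ℝ) ^ 2)) atTop (𝓝 0) := by
    have := (Real.continuous_sqrt.tendsto' 0 0 Real.sqrt_zero).comp h
    exact this
  refine h2.congr' ?_
  filter_upwards [eventually_ge_atTop 1] with n hn
  have hn' : (0 : ℝ) < (n : ℝ) := by exact_mod_cast hn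
  rw [Real.sqrt_div (hv n), Real.sqrt_sq hn'.le]

set_option maxHeartbeats 1600000 in
/-- With unlimited generation and storage, the greedy policy achieves expected
average generation `(E[Δ⁻ - αΔ⁺])⁺` for IID prediction errors with mean `μ ≥ 0`. -/
theorem stmt5 {Ω : Type*} [MeasureSpace Ω] [IsProbabilityMeasure (ℙ : Measure Ω)]
    (Δ : ℕ → Ω → ℝ) (S G : ℕ → Ω → ℝ) (αc αd s₁ : ℝ)
    (hαc : αc ∈ Set.Ioo (0 : ℝ) 1) (hαd : αd ∈ Set.Ioo (0 : ℝ) 1)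
    (hmeas : ∀ i, Measurable (Δ i))
    (hindep : iIndepFun Δ ℙ)
    (hident : ∀ i j, IdentDistrib (Δ i) (Δ j) ℙ ℙ)
    (hL2 : ∀ i, MemLp (Δ i) 2 ℙ)
    (μ : ℝ) (hμ : 0 ≤ μ)
    (hmean : ∀ i, ∫ ω, Δ i ω ∂ℙ = μ)
    (hS1 : ∀ ω, S 1 ω = s₁) (hs₁ : 0 ≤ s₁)
    (hSdyn : ∀ i ≥ 1, ∀ ω,
      S (i + 1) ω = max (S i ω + αc * max (Δ i ω) 0 - max (-(Δ i ω)) 0 / αd) 0)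
    (hG : ∀ i ≥ 1, ∀ ω,
      G i ω = max (-(Δ i ω)) 0 - (αc * αd) * max (Δ i ω) 0 + αd * (S (i + 1) ω - S i ω)) :
    Tendsto (fun n : ℕ => ∫ ω, (1 / (n : ℝ)) * ∑ i ∈ Finset.Icc 1 n, G i ω ∂ℙ)
      atTop (𝓝 (max (∫ ω, (max (-(Δ 1 ω)) 0 - (αc * αd) * max (Δ 1 ω) 0) ∂ℙ) 0)) := by
  obtain ⟨hαc0, hαc1⟩ := hαc
  obtain ⟨hαd0, hαd1⟩ := hαd
  -- basic definitions
  set f : ℝ → ℝ := fun d => αc * max d 0 - max (-d) 0 / αd with hfdef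
  have hfcont : Continuous f := by
    apply Continuous.sub
    · exact continuous_const.mul (continuous_id.max continuous_const)
    · exact (continuous_neg.max continuous_const).div_const _
  set X : ℕ → Ω → ℝ := fun i => f ∘ Δ i with hXdef
  have hXval : ∀ i ω, X i ω = αc * max (Δ i ω) 0 - max (-(Δ i ω)) 0 / αd := fun i ω => rfl
  have hXmeas : ∀ i, Measurable (X i) := fun i => hfcont.measurable.comp (hmeas i)
  have hfbound : ∀ d : ℝ, |f d| ≤ (αc + 1 / αd) * |d| := by
    intro d
    rcases le_total 0 d with hd | hd
    · rw [hfdef]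
      simp only [max_eq_left hd, max_eq_right (neg_nonpos.2 hd), zero_div, sub_zero]
      rw [abs_of_nonneg (mul_nonneg hαc0.le hd), abs_of_nonneg hd]
      have h1 : 0 ≤ 1 / αd := by positivity
      nlinarith
    · rw [hfdef]
      simp only [max_eq_right hd, max_eq_left (neg_nonneg.2 hd), mul_zero, zero_sub]
      rw [abs_neg, abs_of_nonneg (div_nonneg (neg_nonneg.2 hd) hαd0.le), abs_of_nonpos hd]
      have h1 : 0 ≤ -d := by linarith
      have h2 : 0 ≤ αc * (-d) := by positivity
      rw [div_eq_mul_inv, one_div]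
      nlinarith
  have hXL2 : ∀ i, MemLp (X i) 2 ℙ := by
    intro i
    refine MemLp.of_le_mul (c := αc + 1 / αd) (hL2 i) ((hXmeas i).aestronglyMeasurable)
      (Filter.Eventually.of_forall fun ω => ?_)
    have := hfbound (Δ i ω); rw [Real.norm_eq_abs, Real.norm_eq_abs]; exact this
  have hXint : ∀ i, Integrable (X i) ℙ := fun i => (hXL2 i).integrable one_le_two
  set m : ℝ := ∫ ω, X 1 ω ∂ℙ with hmdef
  have hXident : ∀ i, IdentDistrib (X i) (X 1) ℙ ℙ := fun i =>
    (hident i 1).comp hfcont.measurable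
  have hXmean : ∀ i, ∫ ω, X i ω ∂ℙ = m := fun i => (hXident i).integral_eq
  -- centered variables
  set g : ℝ → ℝ := fun d => f d - m with hgdef
  have hgcont : Continuous g := hfcont.sub continuous_const
  set Y : ℕ → Ω → ℝ := fun i => g ∘ Δ i with hYdef
  have hYeq : ∀ i ω, Y i ω = X i ω - m := fun i ω => rfl
  have hYL2 : ∀ i, MemLp (Y i) 2 ℙ := by
    intro i
    exact MemLp.ae_eq (Filter.Eventually.of_forall fun ω => rfl)
      ((hXL2 i).sub (memLp_const (E := ℝ) m))
  have hYint : ∀ i, Integrable (Y i) ℙ := fun i => (hYL2 i).integrable one_le_two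
  have hYident : ∀ i, IdentDistrib (Y i) (Y 1) ℙ ℙ := fun i =>
    (hident i 1).comp hgcont.measurable
  have hYmean : ∀ i, ∫ ω, Y i ω ∂ℙ = 0 := by
    intro i
    have : (fun ω => Y i ω) = fun ω => X i ω - m := funext fun ω => hYeq i ω
    rw [this, integral_sub (hXint i) (integrable_const m), hXmean i, integral_const]
    simp
  have hYindep : ∀ i j, i ≠ j → IndepFun (Y i) (Y j) ℙ := fun i j hij =>
    (hindep.indepFun hij).comp hgcont.measurable hgcont.measurable
  set σ2 : ℝ := variance (Y 1) ℙ with hσ2def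
  have hσ2nonneg : 0 ≤ σ2 := variance_nonneg _ _
  have hYvar : ∀ i, variance (Y i) ℙ = σ2 := fun i => (hYident i).variance_eq
  -- the centered walk
  set W : ℕ → Ω → ℝ := fun k ω => ∑ i ∈ Finset.Ioc 0 k, Y i ω with hWdef
  have hWfun : ∀ k, W k = ∑ i ∈ Finset.Ioc 0 k, Y i := by
    intro k; funext ω; rw [Finset.sum_apply]
  have hWL2 : ∀ k, MemLp (W k) 2 ℙ := by
    intro k; rw [hWfun k]; exact memLp_finset_sum' _ fun i _ => hYL2 i
  have hWsq_int : ∀ k l, Integrable (fun ω => (W l ω - W k ω) ^ 2) ℙ := fun k l =>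
    ((hWL2 l).sub (hWL2 k)).integrable_sq
  have hW0 : ∀ ω, W 0 ω = 0 := by intro ω; simp [hWdef]
  have hWsucc : ∀ n ω, W (n + 1) ω = W n ω + Y (n + 1) ω := by
    intro n ω
    simp only [hWdef]
    rw [Finset.sum_Ioc_succ_top (Nat.zero_le _)]
  -- variance of increments
  have hWvar : ∀ k l : ℕ, k ≤ l →
      ∫ ω, (W l ω - W k ω) ^ 2 ∂ℙ = ((l - k : ℕ) : ℝ) * σ2 := by
    intro k l hkl
    have hfun : ∀ ω, W l ω - W k ω = (∑ i ∈ Finset.Ioc k l, Y i) ω := by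
      intro ω
      rw [Finset.sum_apply]
      simp only [hWdef]
      rw [← Finset.sum_Ioc_consecutive (fun i => Y i ω) (Nat.zero_le k) hkl]
      ring
    have hZ2 : MemLp (∑ i ∈ Finset.Ioc k l, Y i) 2 ℙ :=
      memLp_finset_sum' _ fun i _ => hYL2 i
    have hmean0 : ∫ ω, (∑ i ∈ Finset.Ioc k l, Y i) ω ∂ℙ = 0 := by
      simp only [Finset.sum_apply]
      rw [integral_finset_sum _ fun i _ => hYint i]
      simp [hYmean]
    have hvs : variance (∑ i ∈ Finset.Ioc k l, Y i) ℙ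
        = ∑ i ∈ Finset.Ioc k l, variance (Y i) ℙ :=
      IndepFun.variance_sum (fun i _ => hYL2 i) (fun i _ j _ hij => hYindep i j hij)
    have hfe : (fun ω => (W l ω - W k ω) ^ 2)
        = fun ω => ((∑ i ∈ Finset.Ioc k l, Y i) ω) ^ 2 := by
      funext ω; rw [hfun ω]
    calc ∫ ω, (W l ω - W k ω) ^ 2 ∂ℙ
        = ∫ ω, ((∑ i ∈ Finset.Ioc k l, Y i) ω) ^ 2 ∂ℙ := by
          exact congrArg (integral ℙ) hfe
      _ = variance (∑ i ∈ Finset.Ioc k l, Y i) ℙ := by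
          rw [variance_eq_sub hZ2, hmean0]
          simp [Pi.pow_apply]
      _ = ((l - k : ℕ) : ℝ) * σ2 := by
          rw [hvs, Finset.sum_congr rfl fun i _ => hYvar i, Finset.sum_const, Nat.card_Ioc]
          simp [nsmul_eq_mul]
  -- basic facts about S
  have hSdyn' : ∀ n : ℕ, ∀ ω, S (n + 2) ω = max (S (n + 1) ω + X (n + 1) ω) 0 := by
    intro n ω
    rw [hSdyn (n + 1) (by omega) ω, hXval]
    ring_nf
  have hSint : ∀ n : ℕ, Integrable (S (n + 1)) ℙ := by
    intro n
    induction n with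
    | zero =>
      rw [show S 1 = fun _ => s₁ from funext hS1]
      exact integrable_const _
    | succ n ih =>
      rw [show S (n + 2) = fun ω => max (S (n + 1) ω + X (n + 1) ω) 0 from
        funext (hSdyn' n)]
      exact (ih.add (hXint (n + 1))).pos_part
  have hSpos : ∀ n : ℕ, ∀ ω, 0 ≤ S (n + 1) ω := by
    intro n ω
    cases n with
    | zero => rw [hS1 ω]; exact hs₁
    | succ k => rw [hSdyn' k ω]; exact le_max_right _ _
  have hSlow : ∀ n : ℕ, ∀ ω, s₁ + ∑ i ∈ Finset.Ioc 0 n, X i ω ≤ S (n + 1) ω := by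
    intro n
    induction n with
    | zero => intro ω; simp [hS1 ω]
    | succ n ih =>
      intro ω
      rw [hSdyn' n ω, Finset.sum_Ioc_succ_top (Nat.zero_le _)]
      have := ih ω
      have h2 : S (n + 1) ω + X (n + 1) ω ≤ max (S (n + 1) ω + X (n + 1) ω) 0 :=
        le_max_left _ _
      linarith
  -- the running maximum bound
  set Msup : ℕ → Ω → ℝ := fun n ω =>
    (Finset.range (n + 1)).sup' Finset.nonempty_range_add_one (fun k => W n ω - W k ω)
    with hMdef
  have hMsup_ge : ∀ n ω, 0 ≤ Msup n ω := by
    intro n ω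
    rw [hMdef]
    have := Finset.le_sup' (fun k => W n ω - W k ω) (Finset.self_mem_range_succ n)
    simp only [sub_self] at this; exact this
  have hup : ∀ n : ℕ, ∀ ω, S (n + 1) ω ≤ s₁ + n * max m 0 + Msup n ω := by
    intro n
    induction n with
    | zero =>
      intro ω
      have hM : Msup 0 ω = 0 := by
        simp [hMdef, Finset.range_one]
      rw [hS1 ω, hM]
      simp
    | succ n ih =>
      intro ω
      rw [hSdyn' n ω]
      have h0 : 0 ≤ Msup (n + 1) ω := hMsup_ge (n + 1) ω
      have hmono : Msup n ω + Y (n + 1) ω ≤ Msup (n + 1) ω := by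
        have h1 : Msup n ω ≤ Msup (n + 1) ω - Y (n + 1) ω := by
          rw [hMdef]
          apply Finset.sup'_le
          intro k hk
          have hk' : k ∈ Finset.range (n + 2) := by
            rw [Finset.mem_range] at hk ⊢; omega
          have h2 := Finset.le_sup' (fun k => W (n + 1) ω - W k ω) hk'
          have h3 := hWsucc n ω
          linarith
        linarith
      apply max_le
      · have h4 := ih ω
        have h5 : X (n + 1) ω = Y (n + 1) ω + m := by rw [hYeq]; ring
        have h6 : m ≤ max m 0 := le_max_left _ _
        push_cast
        nlinarith
      · have h7 : (0:ℝ) ≤ (n + 1 : ℕ) * max m 0 := by positivity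
        push_cast at h7 ⊢
        nlinarith [le_max_right m 0]
  -- expected storage
  set e : ℕ → ℝ := fun n => ∫ ω, S (n + 1) ω ∂ℙ with hedef
  have helow0 : ∀ n, 0 ≤ e n := fun n => integral_nonneg (hSpos n)
  have helow1 : ∀ n : ℕ, s₁ + n * m ≤ e n := by
    intro n
    have hint : Integrable (fun ω => s₁ + ∑ i ∈ Finset.Ioc 0 n, X i ω) ℙ :=
      (integrable_const s₁).add (integrable_finset_sum _ fun i _ => hXint i)
    have := integral_mono hint (hSint n) (hSlow n)
    rw [integral_add (integrable_const s₁) (integrable_finset_sum _ fun i _ => hXint i),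
      integral_const, integral_finset_sum _ fun i _ => hXint i] at this
    simp only [Finset.sum_congr rfl fun i _ => hXmean i] at this
    rw [Finset.sum_const, Nat.card_Ioc] at this
    simpa [nsmul_eq_mul] using this
  -- the key upper estimate
  have key : ∀ n : ℕ, 1 ≤ n →
      e n ≤ s₁ + n * max m 0 +
        (2 * Real.sqrt (2 * σ2 * (n + 1) * (Nat.sqrt n + 1)) + 2) := by
    intro n hn
    have hnpos : (0:ℝ) < n := by exact_mod_cast hn
    obtain ⟨s, hsdef⟩ : ∃ s : ℕ, s = Nat.sqrt n := ⟨_, rfl⟩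
    obtain ⟨b, hbdef⟩ : ∃ b : ℕ, b = s + 1 := ⟨_, rfl⟩
    have hbpos : 0 < b := by rw [hbdef]; omega
    obtain ⟨SA, hSAdef⟩ : ∃ SA : Ω → ℝ,
        SA = fun ω => ∑ j ∈ Finset.range (s + 1), (W n ω - W (b * j) ω) ^ 2 := ⟨_, rfl⟩
    obtain ⟨SB, hSBdef⟩ : ∃ SB : Ω → ℝ,
        SB = fun ω => ∑ k ∈ Finset.range (n + 1), (W k ω - W (b * (k / b)) ω) ^ 2 :=
      ⟨_, rfl⟩
    have hSAint : Integrable SA ℙ := by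
      simp only [hSAdef]; exact integrable_finset_sum _ fun j _ => hWsq_int _ _
    have hSBint : Integrable SB ℙ := by
      simp only [hSBdef]; exact integrable_finset_sum _ fun k _ => hWsq_int _ _
    have hSA0 : 0 ≤ ∫ ω, SA ω ∂ℙ := integral_nonneg fun ω => by
      simp only [hSAdef]; exact Finset.sum_nonneg fun j _ => sq_nonneg _
    have hSB0 : 0 ≤ ∫ ω, SB ω ∂ℙ := integral_nonneg fun ω => by
      simp only [hSBdef]; exact Finset.sum_nonneg fun k _ => sq_nonneg _
    obtain ⟨Vn, hVdef⟩ : ∃ Vn : ℝ, Vn = 2 * σ2 * ((n : ℝ) + 1) * ((s : ℝ) + 1) := ⟨_, rfl⟩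
    have hVn0 : 0 ≤ Vn := by rw [hVdef]; positivity
    have hISA : ∫ ω, SA ω ∂ℙ ≤ Vn := by
      have heach : ∀ j ∈ Finset.range (s + 1),
          ∫ ω, (W n ω - W (b * j) ω) ^ 2 ∂ℙ ≤ 2 * σ2 * (n : ℝ) := by
        intro j hj
        rw [Finset.mem_range] at hj
        have hj' : j ≤ s := by omega
        have hss : s * s ≤ n := by
          rw [hsdef, ← pow_two]
          exact Nat.sqrt_le' n
        have hsn : s ≤ n := by rw [hsdef]; exact Nat.sqrt_le_self n
        have hbj : b * j ≤ 2 * n := by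
          calc b * j ≤ b * s := Nat.mul_le_mul_left _ hj'
            _ = s * s + s := by rw [hbdef]; ring
            _ ≤ 2 * n := by omega
        rcases le_total (b * j) n with hle | hge
        · rw [hWvar _ _ hle]
          have hc : ((n - b * j : ℕ) : ℝ) ≤ 2 * (n:ℝ) := by
            have : (n - b * j : ℕ) ≤ 2 * n := by omega
            exact_mod_cast this
          nlinarith [hσ2nonneg]
        · have hfe : (fun ω => (W n ω - W (b * j) ω) ^ 2)
              = fun ω => (W (b * j) ω - W n ω) ^ 2 := by
            funext ω; ring
          rw [show ∫ ω, (W n ω - W (b * j) ω) ^ 2 ∂ℙ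
              = ∫ ω, (W (b * j) ω - W n ω) ^ 2 ∂ℙ from congrArg (integral ℙ) hfe,
            hWvar _ _ hge]
          have hc : ((b * j - n : ℕ) : ℝ) ≤ 2 * (n:ℝ) := by
            have : b * j - n ≤ 2 * n := by omega
            exact_mod_cast this
          nlinarith [hσ2nonneg]
      have hsum : ∫ ω, SA ω ∂ℙ
          = ∑ j ∈ Finset.range (s + 1), ∫ ω, (W n ω - W (b * j) ω) ^ 2 ∂ℙ := by
        simp only [hSAdef]
        exact integral_finset_sum _ fun j _ => hWsq_int _ _
      rw [hsum]
      calc ∑ j ∈ Finset.range (s + 1), ∫ ω, (W n ω - W (b * j) ω) ^ 2 ∂ℙ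
          ≤ ∑ _j ∈ Finset.range (s + 1), 2 * σ2 * (n : ℝ) := Finset.sum_le_sum heach
        _ = ((s : ℝ) + 1) * (2 * σ2 * (n : ℝ)) := by
            rw [Finset.sum_const, Finset.card_range, nsmul_eq_mul]
            push_cast; ring
        _ ≤ Vn := by
            rw [hVdef]
            nlinarith [hσ2nonneg, hnpos, (by positivity : (0:ℝ) ≤ (s:ℝ) + 1)]
    have hISB : ∫ ω, SB ω ∂ℙ ≤ Vn := by
      have heach : ∀ k ∈ Finset.range (n + 1),
          ∫ ω, (W k ω - W (b * (k / b)) ω) ^ 2 ∂ℙ ≤ ((s : ℝ) + 1) * σ2 := by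
        intro k hk
        have hqk : b * (k / b) ≤ k := by
          rw [mul_comm]; exact Nat.div_mul_le_self k b
        rw [hWvar _ _ hqk]
        have hmod : k - b * (k / b) ≤ s := by
          have h1 := Nat.div_add_mod k b
          have h2 : k % b < b := Nat.mod_lt _ hbpos
          omega
        have hc : ((k - b * (k / b) : ℕ) : ℝ) ≤ (s : ℝ) + 1 := by
          have : (k - b * (k / b) : ℕ) ≤ s + 1 := by omega
          exact_mod_cast this
        nlinarith [hσ2nonneg]
      have hsum : ∫ ω, SB ω ∂ℙ
          = ∑ k ∈ Finset.range (n + 1), ∫ ω, (W k ω - W (b * (k / b)) ω) ^ 2 ∂ℙ := by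
        simp only [hSBdef]
        exact integral_finset_sum _ fun k _ => hWsq_int _ _
      rw [hsum]
      calc ∑ k ∈ Finset.range (n + 1), ∫ ω, (W k ω - W (b * (k / b)) ω) ^ 2 ∂ℙ
          ≤ ∑ _k ∈ Finset.range (n + 1), ((s : ℝ) + 1) * σ2 := Finset.sum_le_sum heach
        _ = ((n : ℝ) + 1) * (((s : ℝ) + 1) * σ2) := by
            rw [Finset.sum_const, Finset.card_range, nsmul_eq_mul]
            push_cast; ring
        _ ≤ Vn := by
            rw [hVdef]
            nlinarith [hσ2nonneg, (by positivity : (0:ℝ) ≤ (s:ℝ) + 1),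
              (by positivity : (0:ℝ) ≤ (n:ℝ) + 1)]
    obtain ⟨t, htdef⟩ : ∃ t : ℝ, t = Real.sqrt (∫ ω, SA ω ∂ℙ) + 1 := ⟨_, rfl⟩
    obtain ⟨u, hudef⟩ : ∃ u : ℝ, u = Real.sqrt (∫ ω, SB ω ∂ℙ) + 1 := ⟨_, rfl⟩
    have ht : 0 < t := by
      rw [htdef]; positivity
    have hu : 0 < u := by
      rw [hudef]; positivity
    have ht2 : ∫ ω, SA ω ∂ℙ ≤ t ^ 2 := by
      rw [htdef]
      nlinarith [Real.sq_sqrt hSA0, Real.sqrt_nonneg (∫ ω, SA ω ∂ℙ)]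
    have hu2 : ∫ ω, SB ω ∂ℙ ≤ u ^ 2 := by
      rw [hudef]
      nlinarith [Real.sq_sqrt hSB0, Real.sqrt_nonneg (∫ ω, SB ω ∂ℙ)]
    -- pointwise bound
    have hpt : ∀ ω, S (n + 1) ω
        ≤ s₁ + n * max m 0 + (SA ω / (2 * t) + t / 2 + (SB ω / (2 * u) + u / 2)) := by
      intro ω
      refine le_trans (hup n ω) ?_
      have hM : Msup n ω ≤ SA ω / (2 * t) + t / 2 + (SB ω / (2 * u) + u / 2) := by
        rw [hMdef]
        apply Finset.sup'_le
        intro k hk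
        rw [Finset.mem_range] at hk
        have hk' : k ≤ n := by omega
        have hjmem : k / b ∈ Finset.range (s + 1) := by
          rw [Finset.mem_range]
          have h1 : n < b * b := by
            rw [hbdef, hsdef]; exact Nat.lt_succ_sqrt n
          have h2 : k < (s + 1) * b := by
            calc k ≤ n := hk'
              _ < b * b := h1
              _ = (s + 1) * b := by rw [hbdef]
          exact (Nat.div_lt_iff_lt_mul hbpos).mpr h2
        have ha2 : (W n ω - W (b * (k / b)) ω) ^ 2 ≤ SA ω := by
          simp only [hSAdef]
          exact Finset.single_le_sum (f := fun j => (W n ω - W (b * j) ω) ^ 2)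
            (fun i _ => sq_nonneg _) hjmem
        have hc2 : (W k ω - W (b * (k / b)) ω) ^ 2 ≤ SB ω := by
          simp only [hSBdef]
          exact Finset.single_le_sum (f := fun k => (W k ω - W (b * (k / b)) ω) ^ 2)
            (fun i _ => sq_nonneg _) (Finset.mem_range.mpr hk)
        have h1 : (W n ω - W (b * (k / b)) ω) * (2 * t) ≤ SA ω + t * t := by
          nlinarith [sq_nonneg (W n ω - W (b * (k / b)) ω - t), ha2]
        have h2 : (-(W k ω - W (b * (k / b)) ω)) * (2 * u) ≤ SB ω + u * u := by
          nlinarith [sq_nonneg (W k ω - W (b * (k / b)) ω + u), hc2]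
        have h3 : W n ω - W (b * (k / b)) ω ≤ (SA ω + t * t) / (2 * t) :=
          (le_div_iff₀ (by positivity)).mpr h1
        have h4 : -(W k ω - W (b * (k / b)) ω) ≤ (SB ω + u * u) / (2 * u) :=
          (le_div_iff₀ (by positivity)).mpr h2
        have h5 : (SA ω + t * t) / (2 * t) = SA ω / (2 * t) + t / 2 := by
          field_simp
        have h6 : (SB ω + u * u) / (2 * u) = SB ω / (2 * u) + u / 2 := by
          field_simp
        have h7 : W n ω - W k ω
            = (W n ω - W (b * (k / b)) ω) + (-(W k ω - W (b * (k / b)) ω)) := by ring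
        rw [h7]
        rw [h5] at h3
        rw [h6] at h4
        linarith
      linarith
    -- integrate the pointwise bound
    have hRint : Integrable (fun ω =>
        s₁ + n * max m 0 + (SA ω / (2 * t) + t / 2 + (SB ω / (2 * u) + u / 2))) ℙ := by
      exact (integrable_const _).add
        (((hSAint.div_const _).add (integrable_const _)).add
          ((hSBint.div_const _).add (integrable_const _)))
    have hmono := integral_mono (hSint n) hRint hpt
    have hcomp : ∫ ω, (s₁ + n * max m 0
        + (SA ω / (2 * t) + t / 2 + (SB ω / (2 * u) + u / 2))) ∂ℙ
        = s₁ + n * max m 0 + ((∫ ω, SA ω ∂ℙ) / (2 * t) + t / 2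
          + ((∫ ω, SB ω ∂ℙ) / (2 * u) + u / 2)) := by
      have iconst : ∀ c : ℝ, ∫ (_ : Ω), c ∂ℙ = c := fun c => by
        simp [measure_univ]
      have e1 : ∫ ω, (s₁ + (n:ℝ) * max m 0
            + (SA ω / (2 * t) + t / 2 + (SB ω / (2 * u) + u / 2))) ∂ℙ
          = (∫ (_ : Ω), (s₁ + (n:ℝ) * max m 0) ∂ℙ)
            + ∫ ω, (SA ω / (2 * t) + t / 2 + (SB ω / (2 * u) + u / 2)) ∂ℙ :=
        integral_add (integrable_const _)
          (((hSAint.div_const _).add (integrable_const _)).add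
            ((hSBint.div_const _).add (integrable_const _)))
      have e2 : ∫ ω, (SA ω / (2 * t) + t / 2 + (SB ω / (2 * u) + u / 2)) ∂ℙ
          = (∫ ω, (SA ω / (2 * t) + t / 2) ∂ℙ) + ∫ ω, (SB ω / (2 * u) + u / 2) ∂ℙ :=
        integral_add ((hSAint.div_const _).add (integrable_const _))
          ((hSBint.div_const _).add (integrable_const _))
      have e3 : ∫ ω, (SA ω / (2 * t) + t / 2) ∂ℙ
          = (∫ ω, SA ω / (2 * t) ∂ℙ) + ∫ (_ : Ω), t / 2 ∂ℙ :=
        integral_add (hSAint.div_const _) (integrable_const _)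
      have e4 : ∫ ω, (SB ω / (2 * u) + u / 2) ∂ℙ
          = (∫ ω, SB ω / (2 * u) ∂ℙ) + ∫ (_ : Ω), u / 2 ∂ℙ :=
        integral_add (hSBint.div_const _) (integrable_const _)
      have e5 : ∫ ω, SA ω / (2 * t) ∂ℙ = (∫ ω, SA ω ∂ℙ) / (2 * t) := integral_div _ _
      have e6 : ∫ ω, SB ω / (2 * u) ∂ℙ = (∫ ω, SB ω ∂ℙ) / (2 * u) := integral_div _ _
      rw [e1, e2, e3, e4, e5, e6, iconst, iconst, iconst]
    have hbnd1 : (∫ ω, SA ω ∂ℙ) / (2 * t) + t / 2 ≤ t := by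
      have : (∫ ω, SA ω ∂ℙ) / (2 * t) ≤ t / 2 := by
        rw [div_le_iff₀ (by positivity)]
        nlinarith [ht2]
      linarith
    have hbnd2 : (∫ ω, SB ω ∂ℙ) / (2 * u) + u / 2 ≤ u := by
      have : (∫ ω, SB ω ∂ℙ) / (2 * u) ≤ u / 2 := by
        rw [div_le_iff₀ (by positivity)]
        nlinarith [hu2]
      linarith
    have htV : t ≤ Real.sqrt Vn + 1 := by
      rw [htdef]
      have := Real.sqrt_le_sqrt hISA
      linarith
    have huV : u ≤ Real.sqrt Vn + 1 := by
      rw [hudef]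
      have := Real.sqrt_le_sqrt hISB
      linarith
    have hen : e n = ∫ ω, S (n + 1) ω ∂ℙ := by rw [hedef]
    rw [hen]
    calc ∫ ω, S (n + 1) ω ∂ℙ
        ≤ ∫ ω, (s₁ + n * max m 0
          + (SA ω / (2 * t) + t / 2 + (SB ω / (2 * u) + u / 2))) ∂ℙ := hmono
      _ = s₁ + n * max m 0 + ((∫ ω, SA ω ∂ℙ) / (2 * t) + t / 2
          + ((∫ ω, SB ω ∂ℙ) / (2 * u) + u / 2)) := hcomp
      _ ≤ s₁ + n * max m 0 + (t + u) := by linarith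
      _ ≤ s₁ + n * max m 0 + (2 * Real.sqrt Vn + 2) := by linarith
      _ = s₁ + n * max m 0 + (2 * Real.sqrt (2 * σ2 * (n + 1) * (Nat.sqrt n + 1)) + 2) := by
          rw [hVdef, hsdef]
  -- integral identity
  have hc : (∫ ω, (max (-(Δ 1 ω)) 0 - (αc * αd) * max (Δ 1 ω) 0) ∂ℙ) = -(αd * m) := by
    have hfn : (fun ω => max (-(Δ 1 ω)) 0 - (αc * αd) * max (Δ 1 ω) 0)
        = fun ω => (-αd) * X 1 ω := by
      funext ω
      rw [hXval]
      field_simp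
      ring
    rw [hfn, integral_const_mul, hXmean 1]
    ring
  have hInt : ∀ n : ℕ, 1 ≤ n →
      (∫ ω, (1 / (n : ℝ)) * ∑ i ∈ Finset.Icc 1 n, G i ω ∂ℙ)
        = -(αd * m) + αd * ((e n - s₁) / n) := by
    intro n hn
    have hn' : ((n : ℝ)) ≠ 0 := by
      have : (0:ℝ) < n := by exact_mod_cast hn
      exact ne_of_gt this
    have hptwise : ∀ ω, ∑ i ∈ Finset.Icc 1 n, G i ω
        = ∑ i ∈ Finset.Icc 1 n, (-αd) * X i ω + αd * (S (n + 1) ω - s₁) := by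
      intro ω
      have h1 : ∀ i ∈ Finset.Icc 1 n, G i ω
          = (-αd) * X i ω + αd * (S (i + 1) ω - S i ω) := by
        intro i hi
        rw [Finset.mem_Icc] at hi
        rw [hG i hi.1 ω, hXval]
        field_simp
        ring
      rw [Finset.sum_congr rfl h1, Finset.sum_add_distrib]
      congr 1
      rw [← Finset.mul_sum]
      have h2 : ∑ i ∈ Finset.Icc 1 n, (S (i + 1) ω - S i ω) = S (n + 1) ω - s₁ := by
        rw [show Finset.Icc 1 n = Finset.Ioc 0 n from Finset.Icc_add_one_left_eq_Ioc 0 n]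
        rw [tele_sum (fun k => S k ω) n, hS1 ω]
      rw [h2]
    have hint1 : Integrable (fun ω => ∑ i ∈ Finset.Icc 1 n, (-αd) * X i ω) ℙ :=
      integrable_finset_sum _ fun i _ => (hXint i).const_mul _
    have hint2 : Integrable (fun ω => αd * (S (n + 1) ω - s₁)) ℙ :=
      ((hSint n).sub (integrable_const s₁)).const_mul _
    have hfe2 : (fun ω => (1 / (n : ℝ)) * ∑ i ∈ Finset.Icc 1 n, G i ω)
        = fun ω => (1 / (n : ℝ)) *
          (∑ i ∈ Finset.Icc 1 n, (-αd) * X i ω + αd * (S (n + 1) ω - s₁)) := by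
      funext ω; rw [hptwise ω]
    calc ∫ ω, (1 / (n : ℝ)) * ∑ i ∈ Finset.Icc 1 n, G i ω ∂ℙ
        = ∫ ω, (1 / (n : ℝ)) *
          (∑ i ∈ Finset.Icc 1 n, (-αd) * X i ω + αd * (S (n + 1) ω - s₁)) ∂ℙ := by
          exact congrArg (integral ℙ) hfe2
      _ = (1 / (n : ℝ)) * ∫ ω,
          (∑ i ∈ Finset.Icc 1 n, (-αd) * X i ω + αd * (S (n + 1) ω - s₁)) ∂ℙ :=
          integral_const_mul _ _
      _ = (1 / (n : ℝ)) * ((n : ℝ) * (-(αd * m)) + αd * (e n - s₁)) := by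
          rw [integral_add hint1 hint2,
            integral_finset_sum _ fun i _ => (hXint i).const_mul _]
          have h3 : ∀ i ∈ Finset.Icc 1 n, ∫ ω, (-αd) * X i ω ∂ℙ = -(αd * m) := by
            intro i _
            rw [integral_const_mul, hXmean i]; ring
          rw [Finset.sum_congr rfl h3, Finset.sum_const, Nat.card_Icc, integral_const_mul,
            integral_sub (hSint n) (integrable_const s₁), integral_const]
          simp only [hedef, measure_univ, probReal_univ, ENNReal.toReal_one, one_smul, smul_eq_mul,
            nsmul_eq_mul]
          push_cast [Nat.add_sub_cancel]
          ring
      _ = -(αd * m) + αd * ((e n - s₁) / n) := by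
          field_simp
  -- convergence of the error term
  have herr : Tendsto (fun n : ℕ =>
      (2 * Real.sqrt (2 * σ2 * (n + 1) * (Nat.sqrt n + 1)) + 2) / (n : ℝ))
      atTop (𝓝 0) := by
    set v : ℕ → ℝ := fun n => 2 * σ2 * (n + 1) * (Nat.sqrt n + 1) with hvdef
    have hv0 : ∀ n, 0 ≤ v n := by
      intro n
      simp only [hvdef]
      positivity
    have hA : Tendsto (fun n : ℕ => ((n : ℝ) + 1) / n) atTop (𝓝 1) := by
      have h1 : Tendsto (fun n : ℕ => 1 + 1 / (n : ℝ)) atTop (𝓝 1) := by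
        simpa using (tendsto_const_nhds (x := (1:ℝ))).add tendsto_one_div_atTop_nhds_zero_nat
      refine h1.congr' ?_
      filter_upwards [eventually_ge_atTop 1] with n hn
      have hne : ((n : ℝ)) ≠ 0 := by
        have : (0:ℝ) < n := by exact_mod_cast hn
        exact ne_of_gt this
      field_simp
    have hB : Tendsto (fun n : ℕ => ((Nat.sqrt n : ℝ) + 1) / n) atTop (𝓝 0) := by
      have hub : Tendsto (fun n : ℕ => Real.sqrt (1 / (n : ℝ)) + 1 / (n : ℝ))
          atTop (𝓝 0) := by
        have h1 : Tendsto (fun n : ℕ => Real.sqrt (1 / (n : ℝ))) atTop (𝓝 0) :=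
          (Real.continuous_sqrt.tendsto' 0 0 Real.sqrt_zero).comp
            tendsto_one_div_atTop_nhds_zero_nat
        simpa using h1.add tendsto_one_div_atTop_nhds_zero_nat
      refine tendsto_of_tendsto_of_tendsto_of_le_of_le' tendsto_const_nhds hub ?_ ?_
      · filter_upwards [eventually_ge_atTop 1] with n hn
        positivity
      · filter_upwards [eventually_ge_atTop 1] with n hn
        have hn' : (0:ℝ) < n := by exact_mod_cast hn
        have hsq : (0:ℝ) < Real.sqrt n := Real.sqrt_pos.mpr hn'
        have h4 : Real.sqrt (n : ℝ) / n = Real.sqrt (1 / (n : ℝ)) := by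
          rw [one_div, Real.sqrt_inv, inv_eq_one_div, eq_div_iff (ne_of_gt hsq),
            div_mul_eq_mul_div, Real.mul_self_sqrt hn'.le, div_self (ne_of_gt hn')]
        have h5 : (Nat.sqrt n : ℝ) ≤ Real.sqrt n := Real.nat_sqrt_le_real_sqrt
        rw [add_div, ← h4]
        gcongr
    have hv2 : Tendsto (fun n : ℕ => v n / (n : ℝ) ^ 2) atTop (𝓝 0) := by
      have hfe : (fun n : ℕ => v n / (n : ℝ) ^ 2)
          = fun n : ℕ => (2 * σ2) * ((((n : ℝ) + 1) / n) * (((Nat.sqrt n : ℝ) + 1) / n)) := by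
        funext n
        simp only [hvdef]
        ring
      rw [hfe]
      have := (hA.mul hB).const_mul (2 * σ2)
      simpa using this
    have h1 := sqrt_div_tendsto v hv0 hv2
    have hfe2 : (fun n : ℕ => (2 * Real.sqrt (v n) + 2) / (n : ℝ))
        = fun n : ℕ => 2 * (Real.sqrt (v n) / n) + 2 * (1 / n) := by
      funext n
      rw [add_div]
      ring
    have h2 : Tendsto (fun n : ℕ => (2 * Real.sqrt (v n) + 2) / (n : ℝ)) atTop (𝓝 0) := by
      rw [hfe2]
      simpa using (h1.const_mul 2).add (tendsto_one_div_atTop_nhds_zero_nat.const_mul 2)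
    exact h2
  -- squeeze
  have hE : Tendsto (fun n : ℕ => (e n - s₁) / n) atTop (𝓝 (max m 0)) := by
    have hlowlim : Tendsto (fun n : ℕ => max m (-s₁ * (1 / n))) atTop (𝓝 (max m 0)) := by
      have h2 : Tendsto (fun n : ℕ => -s₁ * (1 / n)) atTop (𝓝 0) := by
        simpa using tendsto_one_div_atTop_nhds_zero_nat.const_mul (-s₁)
      exact tendsto_const_nhds.max h2
    have huplim : Tendsto (fun n : ℕ => max m 0 +
        (2 * Real.sqrt (2 * σ2 * (n + 1) * (Nat.sqrt n + 1)) + 2) / (n : ℝ))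
        atTop (𝓝 (max m 0)) := by
      simpa using tendsto_const_nhds.add herr
    refine tendsto_of_tendsto_of_tendsto_of_le_of_le' hlowlim huplim ?_ ?_
    · filter_upwards [eventually_ge_atTop 1] with n hn
      have hn' : (0 : ℝ) < n := by exact_mod_cast hn
      apply max_le
      · rw [le_div_iff₀ hn']
        have := helow1 n
        linarith
      · have h9 : -s₁ ≤ e n - s₁ := by linarith [helow0 n]
        calc -s₁ * (1 / (n:ℝ)) = -s₁ / n := by ring
          _ ≤ (e n - s₁) / n := (div_le_div_iff_of_pos_right hn').mpr h9
    · filter_upwards [eventually_ge_atTop 1] with n hn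
      have hn' : (0 : ℝ) < n := by exact_mod_cast hn
      rw [div_le_iff₀ hn']
      have := key n hn
      have h8 : (max m 0 +
        (2 * Real.sqrt (2 * σ2 * (n + 1) * (Nat.sqrt n + 1)) + 2) / (n : ℝ)) * n
        = n * max m 0 + (2 * Real.sqrt (2 * σ2 * (n + 1) * (Nat.sqrt n + 1)) + 2) := by
        field_simp
      rw [h8]
      linarith
  -- final assembly
  rw [hc]
  have hlim : -(αd * m) + αd * max m 0 = max (-(αd * m)) 0 := by
    rcases le_total m 0 with hm | hm
    · rw [max_eq_right hm, max_eq_left (by nlinarith)]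
      ring
    · rw [max_eq_left hm, max_eq_right (by nlinarith)]
      ring
  have := (hE.const_mul αd).const_add (-(αd * m))
  rw [hlim] at this
  refine this.congr' ?_
  filter_upwards [eventually_ge_atTop 1] with n hn
  exact (hInt n hn).symm
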